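/- The solution Y(T) of the simple gap equation is continuous on (0, τ₁) and satisfies Y(T) → 0 as T ↑ τ₁. -/

import Mathlib

open Real Set

lemma s7_continuous_tanh : Continuous Real.tanh := by
  have : Real.tanh = fun x => Real.sinh x / Real.cosh x := by
    funext x; exact Real.tanh_eq_sinh_div_cosh x
  rw [this]
  exact Real.continuous_sinh.div Real.continuous_cosh (fun x => (Real.cosh_pos x).ne')

lemma s7_hasDerivAt_tanh (x : ℝ) :
    HasDerivAt Real.tanh (1 / Real.cosh x ^ 2) x := by
  have h : HasDerivAt (fun x => Real.sinh x / Real.cosh x)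
      ((Real.cosh x * Real.cosh x - Real.sinh x * Real.sinh x) / Real.cosh x ^ 2) x :=
    (Real.hasDerivAt_sinh x).div (Real.hasDerivAt_cosh x) (Real.cosh_pos x).ne'
  have h2 : (Real.cosh x * Real.cosh x - Real.sinh x * Real.sinh x) / Real.cosh x ^ 2
      = 1 / Real.cosh x ^ 2 := by
    rw [← sq, ← sq, Real.cosh_sq_sub_sinh_sq]
  have h3 : Real.tanh = fun x => Real.sinh x / Real.cosh x := by
    funext x; exact Real.tanh_eq_sinh_div_cosh x
  rw [h3]; rw [h2] at h; exact h

lemma s7_deriv_tanh : deriv Real.tanh = fun x => 1 / Real.cosh x ^ 2 :=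
  funext fun x => (s7_hasDerivAt_tanh x).deriv

lemma s7_tanh_strictMono : StrictMono Real.tanh :=
  strictMono_of_deriv_pos (by
    rw [s7_deriv_tanh]
    intro x
    positivity)

lemma s7_tanh_concave : StrictConcaveOn ℝ (Ici (0:ℝ)) Real.tanh := by
  apply StrictAntiOn.strictConcaveOn_of_deriv (convex_Ici 0) s7_continuous_tanh.continuousOn
  rw [s7_deriv_tanh, interior_Ici]
  intro x hx y hy hxy
  have : Real.cosh x < Real.cosh y := by
    rw [Real.cosh_lt_cosh, abs_of_pos hx, abs_of_pos (hx.trans hxy)]; exact hxy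
  have hc : (0:ℝ) < Real.cosh x := Real.cosh_pos x
  have : Real.cosh x ^ 2 < Real.cosh y ^ 2 := by nlinarith
  apply div_lt_div_of_pos_left one_pos (by positivity) this

/-- key: tanh x / x strictly antitone on positive reals -/
lemma s7_tanh_div_lt {a b : ℝ} (ha : 0 < a) (hab : a < b) :
    Real.tanh b / b < Real.tanh a / a := by
  have := s7_tanh_concave.secant_strict_mono (a := 0) (x := a) (y := b)
    (self_mem_Ici) (mem_Ici.2 ha.le) (mem_Ici.2 (ha.trans hab).le) ha.ne' (ha.trans hab).ne' hab
  simpa [Real.tanh_zero] using this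

/-- pointwise strict antitone in s -/
lemma s7_point_anti {s₁ s₂ T : ℝ} (hs : 0 < s₁) (hss : s₁ < s₂) (hT : 0 < T) :
    (1 / s₂) * Real.tanh (s₂ / (2 * T)) < (1 / s₁) * Real.tanh (s₁ / (2 * T)) := by
  have h2T : (0:ℝ) < 2 * T := by linarith
  have ha : 0 < s₁ / (2 * T) := div_pos hs h2T
  have hab : s₁ / (2 * T) < s₂ / (2 * T) := by
    exact div_lt_div_of_pos_right hss h2T
  have key := s7_tanh_div_lt ha hab
  have e : ∀ s : ℝ, 0 < s →
      Real.tanh (s / (2 * T)) / (s / (2 * T)) = (2 * T) * ((1 / s) * Real.tanh (s / (2 * T))) := by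
    intro s hs'
    field_simp
  rw [e s₁ hs, e s₂ (hs.trans hss)] at key
  exact lt_of_mul_lt_mul_left key h2T.le

/-- pointwise strict antitone in T -/
lemma s7_point_anti_T {s T₁ T₂ : ℝ} (hs : 0 < s) (hT : 0 < T₁) (hTT : T₁ < T₂) :
    (1 / s) * Real.tanh (s / (2 * T₂)) < (1 / s) * Real.tanh (s / (2 * T₁)) := by
  have h1 : s / (2 * T₂) < s / (2 * T₁) :=
    div_lt_div_of_pos_left hs (by linarith) (by linarith)
  have := s7_tanh_strictMono h1
  have hs1 : (0:ℝ) < 1 / s := by positivity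
  exact mul_lt_mul_of_pos_left this hs1

lemma s7_sqrt_pos {ξ y : ℝ} (hy : 0 ≤ y) (hξ : 0 < ξ) : 0 < Real.sqrt (ξ ^ 2 + y) :=
  Real.sqrt_pos.2 (by positivity)

lemma s7_contOn {ε ω : ℝ} (y T : ℝ) (hy : 0 ≤ y) (hT : 0 < T) (hε : 0 < ε) :
    ContinuousOn (fun ξ : ℝ =>
      (1 / Real.sqrt (ξ ^ 2 + y)) * Real.tanh (Real.sqrt (ξ ^ 2 + y) / (2 * T)))
      (Set.Icc ε ω) := by
  have hsq : Continuous fun ξ : ℝ => Real.sqrt (ξ ^ 2 + y) :=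
    ((continuous_pow 2).add continuous_const).sqrt
  have hne : ∀ ξ ∈ Set.Icc ε ω, Real.sqrt (ξ ^ 2 + y) ≠ 0 := fun ξ hξ =>
    (s7_sqrt_pos hy (hε.trans_le hξ.1)).ne'
  exact (continuousOn_const.div hsq.continuousOn hne).mul
    ((s7_continuous_tanh.comp (hsq.div_const (2 * T))).continuousOn)

/-- g strictly antitone in y -/
lemma s7_g_anti_y {ε ω T y₁ y₂ : ℝ} (hε : 0 < ε) (hεω : ε < ω) (hT : 0 < T)
    (hy₁ : 0 ≤ y₁) (h12 : y₁ < y₂) :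
    (∫ ξ in ε..ω, (1 / Real.sqrt (ξ ^ 2 + y₂)) * Real.tanh (Real.sqrt (ξ ^ 2 + y₂) / (2 * T))) <
    ∫ ξ in ε..ω, (1 / Real.sqrt (ξ ^ 2 + y₁)) * Real.tanh (Real.sqrt (ξ ^ 2 + y₁) / (2 * T)) := by
  have key : ∀ ξ : ℝ, ε ≤ ξ →
      (1 / Real.sqrt (ξ ^ 2 + y₂)) * Real.tanh (Real.sqrt (ξ ^ 2 + y₂) / (2 * T)) <
      (1 / Real.sqrt (ξ ^ 2 + y₁)) * Real.tanh (Real.sqrt (ξ ^ 2 + y₁) / (2 * T)) := by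
    intro ξ hξ
    have hξ0 : 0 < ξ := hε.trans_le hξ
    refine s7_point_anti (s7_sqrt_pos hy₁ hξ0) ?_ hT
    exact Real.sqrt_lt_sqrt (by positivity) (by linarith)
  exact intervalIntegral.integral_lt_integral_of_continuousOn_of_le_of_exists_lt hεω
    (s7_contOn y₂ T (hy₁.trans h12.le) hT hε) (s7_contOn y₁ T hy₁ hT hε)
    (fun ξ hξ => (key ξ hξ.1.le).le) ⟨ω, Set.right_mem_Icc.2 hεω.le, key ω (by linarith)⟩

/-- g strictly antitone in T -/
lemma s7_g_anti_T {ε ω T₁ T₂ y : ℝ} (hε : 0 < ε) (hεω : ε < ω) (hy : 0 ≤ y)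
    (hT₁ : 0 < T₁) (hTT : T₁ < T₂) :
    (∫ ξ in ε..ω, (1 / Real.sqrt (ξ ^ 2 + y)) * Real.tanh (Real.sqrt (ξ ^ 2 + y) / (2 * T₂))) <
    ∫ ξ in ε..ω, (1 / Real.sqrt (ξ ^ 2 + y)) * Real.tanh (Real.sqrt (ξ ^ 2 + y) / (2 * T₁)) := by
  have key : ∀ ξ : ℝ, ε ≤ ξ →
      (1 / Real.sqrt (ξ ^ 2 + y)) * Real.tanh (Real.sqrt (ξ ^ 2 + y) / (2 * T₂)) <
      (1 / Real.sqrt (ξ ^ 2 + y)) * Real.tanh (Real.sqrt (ξ ^ 2 + y) / (2 * T₁)) := fun ξ hξ =>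
    s7_point_anti_T (s7_sqrt_pos hy (hε.trans_le hξ)) hT₁ hTT
  exact intervalIntegral.integral_lt_integral_of_continuousOn_of_le_of_exists_lt hεω
    (s7_contOn y T₂ hy (hT₁.trans hTT) hε) (s7_contOn y T₁ hy hT₁ hε)
    (fun ξ hξ => (key ξ hξ.1.le).le) ⟨ω, Set.right_mem_Icc.2 hεω.le, key ω (by linarith)⟩

/-- regularized joint continuity -/
lemma s7_G_cont {ε : ℝ} (ω : ℝ) (hε : 0 < ε) {c : ℝ} (hc : 0 < c) :
    Continuous (fun p : ℝ × ℝ => ∫ ξ in ε..ω,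
      (1 / Real.sqrt (max (ξ ^ 2) (ε ^ 2) + max p.1 0)) *
        Real.tanh (Real.sqrt (max (ξ ^ 2) (ε ^ 2) + max p.1 0) / (2 * max p.2 c))) := by
  apply intervalIntegral.continuous_parametric_intervalIntegral_of_continuous'
  have hS : Continuous fun q : (ℝ × ℝ) × ℝ =>
      Real.sqrt (max (q.2 ^ 2) (ε ^ 2) + max q.1.1 0) := by fun_prop
  have hSpos : ∀ q : (ℝ × ℝ) × ℝ,
      0 < Real.sqrt (max (q.2 ^ 2) (ε ^ 2) + max q.1.1 0) := by
    intro q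
    apply Real.sqrt_pos.2
    have : ε ^ 2 ≤ max (q.2 ^ 2) (ε ^ 2) := le_max_right _ _
    have : 0 ≤ max q.1.1 0 := le_max_right _ _
    positivity
  have hD : Continuous fun q : (ℝ × ℝ) × ℝ => (2 : ℝ) * max q.1.2 c := by fun_prop
  have hDpos : ∀ q : (ℝ × ℝ) × ℝ, (0:ℝ) < 2 * max q.1.2 c := by
    intro q
    have : c ≤ max q.1.2 c := le_max_right _ _
    linarith
  exact (continuous_const.div hS fun q => (hSpos q).ne').mul
    (s7_continuous_tanh.comp (hS.div hD fun q => (hDpos q).ne'))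

lemma s7_G_eq {ε ω c y T : ℝ} (hε : 0 < ε) (hεω : ε ≤ ω) (hy : 0 ≤ y) (hcT : c ≤ T) :
    (∫ ξ in ε..ω, (1 / Real.sqrt (max (ξ ^ 2) (ε ^ 2) + max y 0)) *
        Real.tanh (Real.sqrt (max (ξ ^ 2) (ε ^ 2) + max y 0) / (2 * max T c)))
    = ∫ ξ in ε..ω,
        (1 / Real.sqrt (ξ ^ 2 + y)) * Real.tanh (Real.sqrt (ξ ^ 2 + y) / (2 * T)) := by
  apply intervalIntegral.integral_congr
  intro ξ hξ
  rw [Set.uIcc_of_le hεω] at hξ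
  have h1 : max (ξ ^ 2) (ε ^ 2) = ξ ^ 2 := max_eq_left (by nlinarith [hξ.1, hε])
  simp only [h1, max_eq_left hy, max_eq_left hcT]

noncomputable def s7g (ε ω y T : ℝ) : ℝ :=
  ∫ ξ in ε..ω, (1 / Real.sqrt (ξ ^ 2 + y)) * Real.tanh (Real.sqrt (ξ ^ 2 + y) / (2 * T))

/-- The solution Y(T) of the simple gap equation is continuous on (0, τ₁) and
Y(T) → 0 as T ↑ τ₁. -/
theorem stmt7 (U₁ ε ω τ₁ : ℝ) (hU : 0 < U₁) (hε : 0 < ε) (hεω : ε < ω)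
    (hτ₁ : 0 < τ₁)
    (hτ : 1 = U₁ * ∫ ξ in ε..ω, (1 / ξ) * Real.tanh (ξ / (2 * τ₁)))
    (Y : ℝ → ℝ)
    (hY : ∀ T ∈ Set.Ioo 0 τ₁, 0 ≤ Y T ∧
      1 = U₁ * ∫ ξ in ε..ω,
        (1 / Real.sqrt (ξ ^ 2 + Y T)) * Real.tanh (Real.sqrt (ξ ^ 2 + Y T) / (2 * T))) :
    ContinuousOn Y (Set.Ioo 0 τ₁) ∧
    Filter.Tendsto Y (nhdsWithin τ₁ (Set.Iio τ₁)) (nhds 0) := by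
  have hg1 : ∀ T ∈ Set.Ioo 0 τ₁, s7g ε ω (Y T) T = 1 / U₁ := fun T hT =>
    eq_one_div_of_mul_eq_one_right ((hY T hT).2).symm
  have hτ' : s7g ε ω 0 τ₁ = 1 / U₁ := by
    have e : s7g ε ω 0 τ₁ = ∫ ξ in ε..ω, (1 / ξ) * Real.tanh (ξ / (2 * τ₁)) := by
      simp only [s7g]
      apply intervalIntegral.integral_congr
      intro ξ hξ
      rw [Set.uIcc_of_le hεω.le] at hξ
      have hξ0 : (0:ℝ) ≤ ξ := le_trans hε.le hξ.1
      simp only [add_zero, Real.sqrt_sq hξ0]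
    rw [e]
    exact eq_one_div_of_mul_eq_one_right hτ.symm
  have hinj : ∀ T y₁ y₂ : ℝ, 0 < T → 0 ≤ y₁ → 0 ≤ y₂ →
      s7g ε ω y₁ T = s7g ε ω y₂ T → y₁ = y₂ := by
    intro T y₁ y₂ hT h1 h2 heq
    simp only [s7g] at heq
    rcases lt_trichotomy y₁ y₂ with h | h | h
    · have := s7_g_anti_y hε hεω hT h1 h; linarith
    · exact h
    · have := s7_g_anti_y hε hεω hT h2 h; linarith
  have hanti : AntitoneOn Y (Set.Ioo 0 τ₁) := by
    intro T₁ hT₁ T₂ hT₂ h12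
    rcases eq_or_lt_of_le h12 with rfl | hlt
    · exact le_refl _
    by_contra hcon
    push_neg at hcon
    have e1 := hg1 T₁ hT₁
    have e2 := hg1 T₂ hT₂
    have a1 := s7_g_anti_T (y := Y T₂) hε hεω (hY T₂ hT₂).1 hT₁.1 hlt
    have a2 := s7_g_anti_y (T := T₁) hε hεω hT₁.1 (hY T₁ hT₁).1 hcon
    simp only [s7g] at e1 e2
    linarith
  have claim : ∀ (T₀ L : ℝ) (l : Filter ℝ), l.NeBot → 0 < T₀ → 0 ≤ L →
      (∀ᶠ T in l, T ∈ Set.Ioo 0 τ₁ ∧ T₀ / 2 ≤ T) →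
      Filter.Tendsto Y l (nhds L) → Filter.Tendsto (fun T : ℝ => T) l (nhds T₀) →
      s7g ε ω L T₀ = 1 / U₁ := by
    intro T₀ L l hl hT₀ hL hev hYl hTl
    haveI := hl
    have hc : (0:ℝ) < T₀ / 2 := by linarith
    have hG := s7_G_cont (ε := ε) ω hε hc
    have h1 : Filter.Tendsto (fun T => (Y T, T)) l (nhds (L, T₀)) :=
      hYl.prodMk_nhds hTl
    have h2 := (hG.tendsto (L, T₀)).comp h1
    simp only [Function.comp] at h2
    have h3 : ∀ᶠ T in l, (∫ ξ in ε..ω,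
        (1 / Real.sqrt (max (ξ ^ 2) (ε ^ 2) + max (Y T) 0)) *
          Real.tanh (Real.sqrt (max (ξ ^ 2) (ε ^ 2) + max (Y T) 0) / (2 * max T (T₀ / 2))))
        = 1 / U₁ := by
      filter_upwards [hev] with T hT
      rw [s7_G_eq hε hεω.le (hY T hT.1).1 hT.2]
      have := hg1 T hT.1
      simpa only [s7g] using this
    have h4 : Filter.Tendsto (fun T => ∫ ξ in ε..ω,
        (1 / Real.sqrt (max (ξ ^ 2) (ε ^ 2) + max (Y T) 0)) *
          Real.tanh (Real.sqrt (max (ξ ^ 2) (ε ^ 2) + max (Y T) 0) / (2 * max T (T₀ / 2))))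
        l (nhds (1 / U₁)) :=
      Filter.Tendsto.congr' (Filter.EventuallyEq.symm h3) tendsto_const_nhds
    have h5 := tendsto_nhds_unique h2 h4
    rw [s7_G_eq hε hεω.le hL (by linarith : T₀ / 2 ≤ T₀)] at h5
    simpa only [s7g] using h5
  have hYnonneg : ∀ T ∈ Set.Ioo 0 τ₁, 0 ≤ Y T := fun T hT => (hY T hT).1
  constructor
  · intro T₀ hT₀
    obtain ⟨h0, h1⟩ := hT₀
    apply ContinuousAt.continuousWithinAt
    rw [continuousAt_iff_continuous_left'_right']
    constructor
    · -- left limit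
      have hne_l : (Set.Ioo 0 T₀).Nonempty := ⟨T₀ / 2, by constructor <;> linarith⟩
      have hanti_l : AntitoneOn Y (Set.Ioo 0 T₀) :=
        hanti.mono (Set.Ioo_subset_Ioo le_rfl h1.le)
      have hmem : ∀ T ∈ Set.Ioo 0 T₀, T ∈ Set.Ioo 0 τ₁ :=
        fun T hT => ⟨hT.1, hT.2.trans h1⟩
      have hbdd_l : BddBelow (Y '' Set.Ioo 0 T₀) := ⟨0, by
        rintro y ⟨T, hT, rfl⟩
        exact hYnonneg T (hmem T hT)⟩
      have htend_l := AntitoneOn.tendsto_nhdsWithin_Ioo_left hne_l hanti_l hbdd_l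
      have hL0 : 0 ≤ sInf (Y '' Set.Ioo 0 T₀) :=
        le_csInf (hne_l.image Y) (by rintro y ⟨T, hT, rfl⟩; exact hYnonneg T (hmem T hT))
      have hev_l : ∀ᶠ T in nhdsWithin T₀ (Set.Iio T₀), T ∈ Set.Ioo 0 τ₁ ∧ T₀ / 2 ≤ T := by
        filter_upwards [Ioo_mem_nhdsLT_of_mem
          (⟨by linarith, le_refl T₀⟩ : T₀ ∈ Set.Ioc (T₀ / 2) T₀)] with T hT
        exact ⟨⟨by linarith [hT.1], hT.2.trans h1⟩, (by linarith [hT.1])⟩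
      have hid : Filter.Tendsto (fun T : ℝ => T) (nhdsWithin T₀ (Set.Iio T₀)) (nhds T₀) :=
        Filter.tendsto_id.mono_left nhdsWithin_le_nhds
      have hgl := claim T₀ (sInf (Y '' Set.Ioo 0 T₀)) _ inferInstance h0 hL0 hev_l htend_l hid
      have : sInf (Y '' Set.Ioo 0 T₀) = Y T₀ :=
        hinj T₀ _ _ h0 hL0 (hYnonneg T₀ ⟨h0, h1⟩) (hgl.trans (hg1 T₀ ⟨h0, h1⟩).symm)
      rwa [this] at htend_l
    · -- right limit
      have hne_r : (Set.Ioo T₀ τ₁).Nonempty := ⟨(T₀ + τ₁) / 2, by constructor <;> linarith⟩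
      have hanti_r : AntitoneOn Y (Set.Ioo T₀ τ₁) :=
        hanti.mono (Set.Ioo_subset_Ioo h0.le le_rfl)
      have hmem : ∀ T ∈ Set.Ioo T₀ τ₁, T ∈ Set.Ioo 0 τ₁ :=
        fun T hT => ⟨h0.trans hT.1, hT.2⟩
      have hbdd_r : BddAbove (Y '' Set.Ioo T₀ τ₁) := ⟨Y T₀, by
        rintro y ⟨T, hT, rfl⟩
        exact hanti ⟨h0, h1⟩ (hmem T hT) hT.1.le⟩
      have htend_r := AntitoneOn.tendsto_nhdsWithin_Ioo_right hne_r hanti_r hbdd_r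
      have hL0 : 0 ≤ sSup (Y '' Set.Ioo T₀ τ₁) := by
        obtain ⟨T, hT⟩ := hne_r
        exact le_trans (hYnonneg T (hmem T hT))
          (le_csSup hbdd_r (Set.mem_image_of_mem Y hT))
      have hev_r : ∀ᶠ T in nhdsWithin T₀ (Set.Ioi T₀), T ∈ Set.Ioo 0 τ₁ ∧ T₀ / 2 ≤ T := by
        filter_upwards [Ioo_mem_nhdsGT_of_mem
          (⟨le_refl T₀, h1⟩ : T₀ ∈ Set.Ico T₀ τ₁)] with T hT
        exact ⟨hmem T hT, by linarith [hT.1]⟩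
      have hid : Filter.Tendsto (fun T : ℝ => T) (nhdsWithin T₀ (Set.Ioi T₀)) (nhds T₀) :=
        Filter.tendsto_id.mono_left nhdsWithin_le_nhds
      have hgl := claim T₀ (sSup (Y '' Set.Ioo T₀ τ₁)) _ inferInstance h0 hL0 hev_r htend_r hid
      have : sSup (Y '' Set.Ioo T₀ τ₁) = Y T₀ :=
        hinj T₀ _ _ h0 hL0 (hYnonneg T₀ ⟨h0, h1⟩) (hgl.trans (hg1 T₀ ⟨h0, h1⟩).symm)
      rwa [this] at htend_r
  · -- limit at τ₁
    have hne : (Set.Ioo (0:ℝ) τ₁).Nonempty := ⟨τ₁ / 2, by constructor <;> linarith⟩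
    have hbdd : BddBelow (Y '' Set.Ioo 0 τ₁) := ⟨0, by
      rintro y ⟨T, hT, rfl⟩; exact hYnonneg T hT⟩
    have htend := AntitoneOn.tendsto_nhdsWithin_Ioo_left hne hanti hbdd
    have hL0 : 0 ≤ sInf (Y '' Set.Ioo 0 τ₁) :=
      le_csInf (hne.image Y) (by rintro y ⟨T, hT, rfl⟩; exact hYnonneg T hT)
    have hev : ∀ᶠ T in nhdsWithin τ₁ (Set.Iio τ₁), T ∈ Set.Ioo 0 τ₁ ∧ τ₁ / 2 ≤ T := by
      filter_upwards [Ioo_mem_nhdsLT_of_mem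
        (⟨by linarith, le_refl τ₁⟩ : τ₁ ∈ Set.Ioc (τ₁ / 2) τ₁)] with T hT
      exact ⟨⟨by linarith [hT.1], hT.2⟩, by linarith [hT.1]⟩
    have hid : Filter.Tendsto (fun T : ℝ => T) (nhdsWithin τ₁ (Set.Iio τ₁)) (nhds τ₁) :=
      Filter.tendsto_id.mono_left nhdsWithin_le_nhds
    have hgl := claim τ₁ (sInf (Y '' Set.Ioo 0 τ₁)) _ inferInstance hτ₁ hL0 hev htend hid
    have : sInf (Y '' Set.Ioo 0 τ₁) = 0 :=
      hinj τ₁ _ _ hτ₁ hL0 le_rfl (hgl.trans hτ'.symm)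
    rwa [this] at htend
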